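/- For the t-dimensional hypercube Q_t (the Cartesian product of t copies of K₂), γ(Q_t) = 2/t; more generally for the Hamming graph H(t,s) (product of t copies of K_s, s ≥ 2), γ(H(t,s)) = s/(t(s−1)). -/

import Mathlib

open Finset SimpleGraph

/-- `max_{uv ∈ E(G)} |x_u - x_v|` (as a real supremum over adjacent pairs). -/
noncomputable def edgeSup {V : Type*} (G : SimpleGraph V) (x : V → ℝ) : ℝ :=
  ⨆ p : {p : V × V // G.Adj p.1 p.2}, |x p.1.1 - x p.1.2|

/-- The `l_∞`-smoothing parameter `γ(G)`. -/
noncomputable def gamma {V : Type*} [Fintype V] (G : SimpleGraph V) : ℝ :=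
  sInf {y | ∃ x : V → ℝ, (∑ v, x v) = 0 ∧ (⨆ v, |x v|) = 1 ∧ y = edgeSup G x}

/-- Transmission of a vertex: sum of graph distances to all vertices. -/
noncomputable def transmission {V : Type*} [Fintype V] (G : SimpleGraph V) (u : V) : ℕ :=
  ∑ v, G.dist u v

/-- The Hamming graph `H(t,s)`: vertices are tuples in `{0,…,s-1}^t`, adjacent
iff they differ in exactly one coordinate. `hammingGraph t 2` is the hypercube `Q_t`. -/
def hammingGraph (t s : ℕ) : SimpleGraph (Fin t → Fin s) where
  Adj x y := hammingDist x y = 1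
  symm := ⟨fun x y h => by simpa only [hammingDist_comm] using h⟩
  loopless := ⟨fun x h => by simp [hammingDist_self] at h⟩

section Aux

variable {t s : ℕ}

lemma sum_ite_ne (s : ℕ) (a : Fin s) :
    ∑ b : Fin s, (if a ≠ b then (1:ℕ) else 0) = s - 1 := by
  rw [← Finset.card_filter, Finset.filter_ne, Finset.card_erase_of_mem (Finset.mem_univ a)]
  simp

lemma count_coord (i : Fin t) (a : Fin s) :
    ∑ v : Fin t → Fin s, (if a ≠ v i then (1:ℕ) else 0) = (s - 1) * s ^ (t - 1) := by
  classical
  rw [← Equiv.sum_comp (Equiv.funSplitAt i (Fin s)).symm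
    (fun v => if a ≠ v i then (1:ℕ) else 0)]
  have key : ∀ p : Fin s × ({j : Fin t // j ≠ i} → Fin s),
      (Equiv.funSplitAt i (Fin s)).symm p i = p.1 := by
    intro p
    simp [Equiv.funSplitAt, Equiv.piSplitAt]
  simp only [key]
  rw [Fintype.sum_prod_type]
  have h2 : ∀ b : Fin s,
      (∑ _w : {j : Fin t // j ≠ i} → Fin s, (if a ≠ b then (1:ℕ) else 0))
        = (if a ≠ b then (1:ℕ) else 0) * s ^ (t-1) := by
    intro b
    rw [Finset.sum_const, smul_eq_mul, mul_comm]
    congr 1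
    rw [Finset.card_univ, Fintype.card_fun, Fintype.card_fin]
    congr 1
    rw [Fintype.card_subtype, Finset.filter_ne', Finset.card_erase_of_mem (Finset.mem_univ i)]
    simp
  rw [Finset.sum_congr rfl (fun b _ => h2 b), ← Finset.sum_mul, sum_ite_ne]

lemma sum_hammingDist (u : Fin t → Fin s) :
    ∑ v : Fin t → Fin s, hammingDist u v = t * ((s - 1) * s ^ (t - 1)) := by
  classical
  have h : ∀ v : Fin t → Fin s,
      hammingDist u v = ∑ i : Fin t, (if u i ≠ v i then (1:ℕ) else 0) := by
    intro v
    rw [hammingDist, Finset.card_filter]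
  rw [Finset.sum_congr rfl (fun v _ => h v), Finset.sum_comm,
    Finset.sum_congr rfl (fun i _ => count_coord i (u i)), Finset.sum_const,
    Finset.card_univ, Fintype.card_fin, smul_eq_mul]

lemma edgeSup_bddAbove {V : Type*} [Finite V] (G : SimpleGraph V) (x : V → ℝ) :
    BddAbove (Set.range fun p : {p : V × V // G.Adj p.1 p.2} => |x p.1.1 - x p.1.2|) :=
  Set.Finite.bddAbove (Set.finite_range _)

lemma le_edgeSup {V : Type*} [Finite V] (G : SimpleGraph V) (x : V → ℝ) {a b : V}
    (h : G.Adj a b) : |x a - x b| ≤ edgeSup G x :=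
  le_ciSup (edgeSup_bddAbove G x) ⟨(a, b), h⟩

lemma abs_sub_le_hamming (x : (Fin t → Fin s) → ℝ) (u v : Fin t → Fin s) :
    |x u - x v| ≤ (hammingDist u v : ℝ) * edgeSup (hammingGraph t s) x := by
  classical
  generalize hd : hammingDist u v = n
  induction n generalizing v with
  | zero =>
    have : u = v := hammingDist_eq_zero.mp hd
    simp [this]
  | succ n ih =>
    have hne : u ≠ v := by
      intro h; rw [h, hammingDist_self] at hd; omega
    obtain ⟨i, hi⟩ := Function.ne_iff.mp hne
    set w : Fin t → Fin s := Function.update v i (u i) with hw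
    have hfil : ({j | u j ≠ w j} : Finset (Fin t))
        = ({j | u j ≠ v j} : Finset (Fin t)).erase i := by
      ext j
      by_cases hji : j = i <;>
        simp [hw, Function.update_apply, hji]
    have h1 : hammingDist u w = n := by
      rw [hammingDist, hfil, Finset.card_erase_of_mem (by simpa using hi)]
      rw [hammingDist] at hd
      omega
    have h2 : hammingDist w v = 1 := by
      have : ({j | w j ≠ v j} : Finset (Fin t)) = {i} := by
        ext j
        by_cases hji : j = i <;>
          simp [hw, Function.update_apply, hji, hi]
      rw [hammingDist, this, Finset.card_singleton]
    have hadj : (hammingGraph t s).Adj w v := h2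
    calc |x u - x v| ≤ |x u - x w| + |x w - x v| := abs_sub_le _ _ _
      _ ≤ (n : ℝ) * edgeSup (hammingGraph t s) x + edgeSup (hammingGraph t s) x := by
          gcongr ?_ + ?_
          · exact ih w h1
          · exact le_edgeSup _ _ hadj
      _ = ((n + 1 : ℕ) : ℝ) * edgeSup (hammingGraph t s) x := by push_cast; ring

lemma gamma_lb (ht : 1 ≤ t) (hs : 2 ≤ s) (x : (Fin t → Fin s) → ℝ)
    (hsum : ∑ v, x v = 0) (hsup : (⨆ v, |x v|) = 1) :
    (s:ℝ) / ((t:ℝ) * ((s:ℝ) - 1)) ≤ edgeSup (hammingGraph t s) x := by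
  classical
  haveI : Nonempty (Fin t → Fin s) := ⟨fun _ => ⟨0, by omega⟩⟩
  set M := edgeSup (hammingGraph t s) x with hM
  obtain ⟨u, hu⟩ := Finite.exists_max (fun v : Fin t → Fin s => |x v|)
  have hxu : |x u| = 1 := by
    refine le_antisymm ?_ ?_
    · rw [← hsup]
      exact le_ciSup (f := fun v => |x v|) (Set.Finite.bddAbove (Set.finite_range _)) u
    · rw [← hsup]
      exact ciSup_le hu
  have hcard : (Fintype.card (Fin t → Fin s)) = s ^ t := by
    rw [Fintype.card_fun]; simp
  have key : ((s:ℝ))^t = |∑ v, (x u - x v)| := by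
    rw [Finset.sum_sub_distrib, hsum, sub_zero, Finset.sum_const, Finset.card_univ, hcard,
      nsmul_eq_mul, abs_mul, hxu, mul_one, Nat.abs_cast]
    push_cast; ring
  have step : ((s:ℝ))^t ≤ (∑ v, (hammingDist u v : ℝ)) * M := by
    rw [key]
    calc |∑ v, (x u - x v)| ≤ ∑ v, |x u - x v| := Finset.abs_sum_le_sum_abs _ _
      _ ≤ ∑ v, (hammingDist u v : ℝ) * M :=
          Finset.sum_le_sum (fun v _ => abs_sub_le_hamming x u v)
      _ = (∑ v, (hammingDist u v : ℝ)) * M := by rw [Finset.sum_mul]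
  have hsumd : (∑ v, (hammingDist u v : ℝ)) = (t:ℝ) * (((s:ℝ)-1) * (s:ℝ)^(t-1)) := by
    rw [← Nat.cast_sum, sum_hammingDist]
    push_cast [Nat.cast_sub (by omega : 1 ≤ s)]
    ring
  have hspow : ((s:ℝ))^t = (s:ℝ) * (s:ℝ)^(t-1) := by
    conv_lhs => rw [show t = (t-1)+1 by omega]
    rw [pow_succ]; ring
  have hs0 : (0:ℝ) < (s:ℝ) := by exact_mod_cast (by omega : 0 < s)
  have hp : (0:ℝ) < (s:ℝ)^(t-1) := pow_pos hs0 _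
  have hs2 : (2:ℝ) ≤ (s:ℝ) := by exact_mod_cast hs
  have ht1 : (1:ℝ) ≤ (t:ℝ) := by exact_mod_cast ht
  have htpos : (0:ℝ) < (t:ℝ) * ((s:ℝ)-1) := by nlinarith
  rw [div_le_iff₀ htpos]
  rw [hsumd, hspow] at step
  nlinarith [step, hp, mul_pos htpos hp]

lemma gamma_hamming (ht : 1 ≤ t) (hs : 2 ≤ s) :
    gamma (hammingGraph t s) = (s:ℝ) / ((t:ℝ) * ((s:ℝ) - 1)) := by
  classical
  set c : ℝ := (s:ℝ) / ((t:ℝ) * ((s:ℝ)-1)) with hc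
  have hs2 : (2:ℝ) ≤ (s:ℝ) := by exact_mod_cast hs
  have ht1 : (1:ℝ) ≤ (t:ℝ) := by exact_mod_cast ht
  have htpos : (0:ℝ) < (t:ℝ) * ((s:ℝ)-1) := by nlinarith
  have hcpos : 0 ≤ c := by positivity
  have hct : c * ((t:ℝ) * ((s:ℝ)-1)) = (s:ℝ) := div_mul_cancel₀ _ (ne_of_gt htpos)
  clear_value c
  set z : Fin t → Fin s := fun _ => ⟨0, by omega⟩ with hz
  set x0 : (Fin t → Fin s) → ℝ := fun v => 1 - c * (hammingDist z v) with hx0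
  have hspow : ((s:ℝ))^t = (s:ℝ) * (s:ℝ)^(t-1) := by
    conv_lhs => rw [show t = (t-1)+1 by omega]
    rw [pow_succ]; ring
  have hdle : ∀ v : Fin t → Fin s, (hammingDist z v : ℝ) ≤ (t:ℝ) := by
    intro v
    have := hammingDist_le_card_fintype (x := z) (y := v)
    simp only [Fintype.card_fin] at this
    exact_mod_cast this
  have hctle : c * (t:ℝ) ≤ 2 := by nlinarith [hct]
  have hxabs : ∀ v, |x0 v| ≤ 1 := by
    intro v
    have h1 : 0 ≤ c * (hammingDist z v : ℝ) := mul_nonneg hcpos (by positivity)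
    have h2 : c * (hammingDist z v : ℝ) ≤ c * t := mul_le_mul_of_nonneg_left (hdle v) hcpos
    have hx0v : x0 v = 1 - c * (hammingDist z v : ℝ) := rfl
    rw [hx0v, abs_le]
    constructor
    · nlinarith
    · nlinarith
  set i0 : Fin t := ⟨0, by omega⟩ with hi0
  set b : Fin t → Fin s := Function.update z i0 ⟨1, by omega⟩ with hb
  have hdb : hammingDist z b = 1 := by
    have hset : ({j | z j ≠ b j} : Finset (Fin t)) = {i0} := by
      ext j
      by_cases hj : j = i0
      · subst hj
        simp [hb, hz, Function.update_apply, Fin.ext_iff]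
      · simp [hb, hz, Function.update_apply, hj]
    rw [hammingDist, hset, Finset.card_singleton]
  have hadj : (hammingGraph t s).Adj z b := hdb
  have hcard : (Fintype.card (Fin t → Fin s)) = s ^ t := by
    rw [Fintype.card_fun]; simp
  haveI : Nonempty (Fin t → Fin s) := ⟨z⟩
  haveI : Nonempty {p : (Fin t → Fin s) × (Fin t → Fin s) // (hammingGraph t s).Adj p.1 p.2} :=
    ⟨⟨(z, b), hadj⟩⟩
  have hsum0 : ∑ v, x0 v = 0 := by
    have hx0v : ∀ v, x0 v = 1 - c * (hammingDist z v : ℝ) := fun v => rfl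
    rw [Finset.sum_congr rfl (fun v _ => hx0v v)]
    rw [Finset.sum_sub_distrib, Finset.sum_const, ← Finset.mul_sum, ← Nat.cast_sum,
      sum_hammingDist, Finset.card_univ, hcard, nsmul_eq_mul, mul_one]
    push_cast [Nat.cast_sub (by omega : 1 ≤ s)]
    rw [hspow]
    have key2 : c * ((t:ℝ) * (((s:ℝ)-1) * (s:ℝ)^(t-1))) = (s:ℝ) * (s:ℝ)^(t-1) := by
      calc c * ((t:ℝ) * (((s:ℝ)-1) * (s:ℝ)^(t-1)))
          = (c * ((t:ℝ)*((s:ℝ)-1))) * (s:ℝ)^(t-1) := by ring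
        _ = (s:ℝ) * (s:ℝ)^(t-1) := by rw [hct]
    rw [key2, sub_self]
  have hsup1 : (⨆ v, |x0 v|) = 1 := by
    apply le_antisymm
    · exact ciSup_le hxabs
    · have h0 : |x0 z| = 1 := by
        have : x0 z = 1 - c * (hammingDist z z : ℝ) := rfl
        rw [this, hammingDist_self]
        norm_num
      rw [← h0]
      exact le_ciSup (f := fun v => |x0 v|) (Set.Finite.bddAbove (Set.finite_range _)) z
  have hedge : edgeSup (hammingGraph t s) x0 = c := by
    apply le_antisymm
    · apply ciSup_le
      rintro ⟨⟨a, b'⟩, hab⟩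
      have hab' : hammingDist a b' = 1 := hab
      have tri1 : (hammingDist z b' : ℝ) ≤ (hammingDist z a : ℝ) + 1 := by
        have := hammingDist_triangle z a b'
        rw [hab'] at this
        exact_mod_cast this
      have tri2 : (hammingDist z a : ℝ) ≤ (hammingDist z b' : ℝ) + 1 := by
        have := hammingDist_triangle z b' a
        rw [hammingDist_comm b' a, hab'] at this
        exact_mod_cast this
      have heq : x0 a - x0 b' = c * ((hammingDist z b' : ℝ) - (hammingDist z a : ℝ)) := by
        have h1 : x0 a = 1 - c * (hammingDist z a : ℝ) := rfl
        have h2 : x0 b' = 1 - c * (hammingDist z b' : ℝ) := rfl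
        rw [h1, h2]; ring
      rw [heq, abs_mul, abs_of_nonneg hcpos]
      have habs : |((hammingDist z b' : ℝ)) - (hammingDist z a : ℝ)| ≤ 1 :=
        abs_sub_le_iff.mpr ⟨by linarith, by linarith⟩
      nlinarith [habs, hcpos]
    · have hval : |x0 z - x0 b| = c := by
        have h1 : x0 z = 1 - c * (hammingDist z z : ℝ) := rfl
        have h2 : x0 b = 1 - c * (hammingDist z b : ℝ) := rfl
        have h3 : x0 z - x0 b = c := by
          rw [h1, h2, hammingDist_self, hdb]
          norm_num
        rw [h3, abs_of_nonneg hcpos]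
      rw [← hval]
      exact le_ciSup (edgeSup_bddAbove _ _) ⟨(z, b), hadj⟩
  have hmem : c ∈ {y | ∃ x : (Fin t → Fin s) → ℝ,
      (∑ v, x v) = 0 ∧ (⨆ v, |x v|) = 1 ∧ y = edgeSup (hammingGraph t s) x} :=
    ⟨x0, hsum0, hsup1, hedge.symm⟩
  rw [gamma]
  apply le_antisymm
  · apply csInf_le ?_ hmem
    refine ⟨c, ?_⟩
    rintro y ⟨x, h1, h2, rfl⟩
    rw [hc]
    exact gamma_lb ht hs x h1 h2
  · apply le_csInf ⟨_, hmem⟩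
    rintro y ⟨x, h1, h2, rfl⟩
    rw [hc]
    exact gamma_lb ht hs x h1 h2

end Aux

theorem stmt19 (t s : ℕ) (ht : 1 ≤ t) (hs : 2 ≤ s) :
    gamma (hammingGraph t 2) = 2 / (t : ℝ) ∧
      gamma (hammingGraph t s) = (s : ℝ) / ((t : ℝ) * ((s : ℝ) - 1)) := by
  constructor
  · have h := gamma_hamming (t := t) (s := 2) ht le_rfl
    rw [h]; norm_num
  · exact gamma_hamming ht hs
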